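/- Let g ~ N(0, I_N), E > 0, and k ≥ 1. The probability that there exist two distinct points x, x' ∈ {±1}^N with |⟨g,x⟩| ≤ 2^{-E}, |⟨g,x'⟩| ≤ 2^{-E}, and ‖x - x'‖ ≤ 2√k is at most 2^{-E} · 2^{k} · (eN)^{k} · C for an absolute constant C. In particular, if E ≥ ω(k log N) this probability tends to 0. -/

import Mathlib

open MeasureTheory ProbabilityTheory Filter
open scoped NNReal ENNReal

/-- The standard Gaussian measure on `ℝ^N`. -/
noncomputable def stdGaussianPi (N : ℕ) : Measure (Fin N → ℝ) :=
  Measure.pi fun _ => gaussianReal 0 1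

/-- The event that there exist two distinct points of `{±1}^N`, within
Euclidean distance `2√k` of each other, both with energy at least `E`. -/
def BadSet (N : ℕ) (E : ℝ) (k : ℕ) : Set (Fin N → ℝ) :=
  {g | ∃ x x' : Fin N → ℝ, (∀ i, x i = 1 ∨ x i = -1) ∧ (∀ i, x' i = 1 ∨ x' i = -1) ∧
    x ≠ x' ∧ |∑ i, g i * x i| ≤ (2 : ℝ) ^ (-E) ∧ |∑ i, g i * x' i| ≤ (2 : ℝ) ^ (-E) ∧
    ∑ i, (x i - x' i) ^ 2 ≤ 4 * k}

noncomputable def Fset (N k : ℕ) : Finset (Fin N → ℝ) :=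
  (Fintype.piFinset fun _ : Fin N => ({-2, 0, 2} : Finset ℝ)).filter
    (fun v => v ≠ 0 ∧ (Finset.univ.filter fun i => v i ≠ 0).card ≤ k)

lemma gaussPDF_le (x : ℝ) : gaussianPDFReal 0 1 x ≤ 1 / 2 := by
  rw [gaussianPDFReal]
  have h0 : ((1:ℝ≥0):ℝ) = 1 := by norm_num
  rw [h0]
  have hπ : (2:ℝ) ≤ Real.sqrt (2 * Real.pi * 1) := by
    have h4 : (4:ℝ) ≤ 2 * Real.pi * 1 := by nlinarith [Real.pi_gt_three]
    calc (2:ℝ) = Real.sqrt 4 := by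
          rw [show (4:ℝ) = 2^2 by norm_num, Real.sqrt_sq (by norm_num)]
      _ ≤ _ := Real.sqrt_le_sqrt h4
  have hexp : Real.exp (-(x - 0)^2 / (2*1)) ≤ 1 := by
    rw [Real.exp_le_one_iff]
    have := sq_nonneg (x - 0)
    nlinarith
  have hinv : (Real.sqrt (2 * Real.pi * 1))⁻¹ ≤ 1/2 := by
    rw [inv_le_comm₀ (by positivity) (by norm_num)]
    linarith
  calc (Real.sqrt (2 * Real.pi * 1))⁻¹ * Real.exp (-(x - 0)^2 / (2*1))
      ≤ (1/2) * 1 := by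
        apply mul_le_mul hinv hexp (Real.exp_nonneg _) (by norm_num)
    _ = 1/2 := by norm_num

lemma gauss_Icc_le (a b : ℝ) :
    gaussianReal 0 1 (Set.Icc a b) ≤ ENNReal.ofReal ((b - a) / 2) := by
  rcases le_or_gt a b with hab | hab
  · rw [gaussianReal_apply 0 one_ne_zero]
    calc ∫⁻ x in Set.Icc a b, gaussianPDF 0 1 x
        ≤ ∫⁻ _ in Set.Icc a b, ENNReal.ofReal (1/2) := by
          refine lintegral_mono fun x => ?_
          exact ENNReal.ofReal_le_ofReal (gaussPDF_le x)
      _ = ENNReal.ofReal (1/2) * volume (Set.Icc a b) := setLIntegral_const _ _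
      _ = ENNReal.ofReal ((b - a) / 2) := by
          rw [Real.volume_Icc, ← ENNReal.ofReal_mul (by norm_num)]
          ring_nf
  · simp [Set.Icc_eq_empty_of_lt hab]

lemma event_bound {m : ℕ} (v : Fin (m+1) → ℝ) (i₀ : Fin (m+1))
    (h2 : v i₀ = 2 ∨ v i₀ = -2) (t : ℝ) (ht : 0 ≤ t) :
    stdGaussianPi (m+1) {g | |∑ i, g i * v i| ≤ 2 * t} ≤ ENNReal.ofReal t := by
  set A : Set (Fin (m+1) → ℝ) := {g | |∑ i, g i * v i| ≤ 2 * t} with hA_def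
  have hmeas : Measurable (fun g : Fin (m+1) → ℝ => ∑ i, g i * v i) :=
    Finset.measurable_sum _ fun i _ => (measurable_pi_apply i).mul_const _
  have hA : MeasurableSet A := by
    have : A = (fun g : Fin (m+1) → ℝ => ∑ i, g i * v i) ⁻¹' (Set.Icc (-(2*t)) (2*t)) := by
      ext g; simp [hA_def, abs_le]
    rw [this]
    exact hmeas measurableSet_Icc
  set e := MeasurableEquiv.piFinSuccAbove (fun _ : Fin (m+1) => ℝ) i₀
  have mp := measurePreserving_piFinSuccAbove (fun _ : Fin (m+1) => gaussianReal 0 1) i₀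
  have hAs : MeasurableSet (e.symm ⁻¹' A) := e.symm.measurable hA
  have key : stdGaussianPi (m+1) A
      = ((gaussianReal 0 1).prod (Measure.pi fun _ : Fin m => gaussianReal 0 1)) (e.symm ⁻¹' A) := by
    have h1 : e ⁻¹' (e.symm ⁻¹' A) = A := by
      ext g; simp
    have h := mp.measure_preimage hAs.nullMeasurableSet
    rw [h1] at h
    exact h
  rw [key, Measure.prod_apply_symm hAs]
  have hslice : ∀ y : Fin m → ℝ,
      gaussianReal 0 1 ((fun x => (x, y)) ⁻¹' (e.symm ⁻¹' A)) ≤ ENNReal.ofReal t := by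
    intro y
    set c : ℝ := ∑ j, y j * v (i₀.succAbove j) with hc
    have hsum : ∀ x : ℝ, ∑ i, (e.symm (x, y)) i * v i = x * v i₀ + c := by
      intro x
      rw [Fin.sum_univ_succAbove (fun i => (e.symm (x, y)) i * v i) i₀]
      simp [e, MeasurableEquiv.piFinSuccAbove_symm_apply, Fin.insertNth_apply_same,
        Fin.insertNth_apply_succAbove, hc]
    rcases h2 with hv | hv
    · have hsub : ((fun x => (x, y)) ⁻¹' (e.symm ⁻¹' A)) ⊆ Set.Icc (-c/2 - t) (-c/2 + t) := by
        intro x hx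
        simp only [Set.mem_preimage, hA_def, Set.mem_setOf_eq, hsum, hv] at hx
        rw [abs_le] at hx
        constructor <;> [linarith [hx.1]; linarith [hx.2]]
      calc gaussianReal 0 1 _ ≤ gaussianReal 0 1 (Set.Icc (-c/2 - t) (-c/2 + t)) :=
            measure_mono hsub
        _ ≤ ENNReal.ofReal ((-c/2 + t - (-c/2 - t))/2) := gauss_Icc_le _ _
        _ = ENNReal.ofReal t := by ring_nf
    · have hsub : ((fun x => (x, y)) ⁻¹' (e.symm ⁻¹' A)) ⊆ Set.Icc (c/2 - t) (c/2 + t) := by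
        intro x hx
        simp only [Set.mem_preimage, hA_def, Set.mem_setOf_eq, hsum, hv] at hx
        rw [abs_le] at hx
        constructor <;> [linarith [hx.2]; linarith [hx.1]]
      calc gaussianReal 0 1 _ ≤ gaussianReal 0 1 (Set.Icc (c/2 - t) (c/2 + t)) :=
            measure_mono hsub
        _ ≤ ENNReal.ofReal ((c/2 + t - (c/2 - t))/2) := gauss_Icc_le _ _
        _ = ENNReal.ofReal t := by ring_nf
  calc ∫⁻ y, gaussianReal 0 1 ((fun x => (x, y)) ⁻¹' (e.symm ⁻¹' A))
        ∂(Measure.pi fun _ : Fin m => gaussianReal 0 1)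
      ≤ ∫⁻ _, ENNReal.ofReal t ∂(Measure.pi fun _ : Fin m => gaussianReal 0 1) :=
        lintegral_mono hslice
    _ = ENNReal.ofReal t := by
        rw [lintegral_const, measure_univ, mul_one]

lemma badset_subset (N : ℕ) (E : ℝ) (k : ℕ) :
    BadSet N E k ⊆ ⋃ v ∈ Fset N k, {g : Fin N → ℝ | |∑ i, g i * v i| ≤ 2 * (2:ℝ)^(-E)} := by
  intro g hg
  obtain ⟨x, x', hx, hx', hne, h1, h2, hd⟩ := hg
  have hv : (x - x') ∈ Fset N k := by
    rw [Fset, Finset.mem_filter]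
    refine ⟨?_, ?_, ?_⟩
    · rw [Fintype.mem_piFinset]
      intro i
      rcases hx i with h | h <;> rcases hx' i with h' | h' <;>
        simp [Pi.sub_apply, h, h'] <;> norm_num
    · intro h0
      apply hne
      funext i
      have := congrFun h0 i
      simp only [Pi.sub_apply, Pi.zero_apply, sub_eq_zero] at this
      exact this
    · set S := Finset.univ.filter fun i => (x - x') i ≠ 0 with hS
      have hterm : ∀ i ∈ S, (4:ℝ) ≤ (x i - x' i)^2 := by
        intro i hi
        rcases hx i with h | h <;> rcases hx' i with h' | h' <;>
          simp [h, h'] <;> norm_num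
        all_goals {
          exfalso
          rw [hS, Finset.mem_filter] at hi
          exact hi.2 (by simp [Pi.sub_apply, h, h']) }
      have hsum : (4:ℝ) * S.card ≤ ∑ i, (x i - x' i)^2 := by
        calc (4:ℝ) * S.card = ∑ _i ∈ S, (4:ℝ) := by
              rw [Finset.sum_const, nsmul_eq_mul, mul_comm]
          _ ≤ ∑ i ∈ S, (x i - x' i)^2 := Finset.sum_le_sum hterm
          _ ≤ ∑ i, (x i - x' i)^2 :=
              Finset.sum_le_sum_of_subset_of_nonneg (Finset.subset_univ S)
                (fun i _ _ => sq_nonneg _)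
      have : (S.card : ℝ) ≤ k := by nlinarith
      exact_mod_cast this
  refine Set.mem_biUnion hv ?_
  · simp only [Set.mem_setOf_eq]
    have : ∑ i, g i * (x - x') i = (∑ i, g i * x i) - ∑ i, g i * x' i := by
      rw [← Finset.sum_sub_distrib]
      exact Finset.sum_congr rfl fun i _ => by simp [Pi.sub_apply, mul_sub]
    rw [this]
    calc |(∑ i, g i * x i) - ∑ i, g i * x' i| ≤ |∑ i, g i * x i| + |∑ i, g i * x' i| :=
          abs_sub _ _
      _ ≤ 2 * (2:ℝ)^(-E) := by linarith

lemma Fset_card (N k : ℕ) (hN : 1 ≤ N) : (Fset N k).card ≤ (k + 1) * N ^ k * 2 ^ k := by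
  classical
  set P : Finset (Finset (Fin N)) :=
    (Finset.univ : Finset (Fin N)).powerset.filter (fun J => J.card ≤ k) with hP
  have hsub : Fset N k ⊆ P.biUnion (fun J =>
      Fintype.piFinset (fun i => if i ∈ J then ({-2, 2} : Finset ℝ) else ({0} : Finset ℝ))) := by
    intro v hv
    rw [Fset, Finset.mem_filter, Fintype.mem_piFinset] at hv
    obtain ⟨hmem, hne, hcard⟩ := hv
    rw [Finset.mem_biUnion]
    refine ⟨Finset.univ.filter fun i => v i ≠ 0, ?_, ?_⟩
    · rw [hP, Finset.mem_filter]
      exact ⟨Finset.mem_powerset.mpr (Finset.subset_univ _), hcard⟩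
    · rw [Fintype.mem_piFinset]
      intro i
      by_cases h : v i = 0
      · simp [h]
      · have := hmem i
        simp only [Finset.mem_insert, Finset.mem_singleton] at this
        simp only [Finset.mem_filter, Finset.mem_univ, true_and, h, not_false_iff, if_pos,
          Finset.mem_insert, Finset.mem_singleton]
        rcases this with h1 | h1 | h1
        · simp [h1]
        · exact absurd h1 h
        · simp [h1]
  calc (Fset N k).card ≤ _ := Finset.card_le_card hsub
    _ ≤ ∑ J ∈ P, (Fintype.piFinset
        (fun i => if i ∈ J then ({-2, 2} : Finset ℝ) else ({0} : Finset ℝ))).card :=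
        Finset.card_biUnion_le
    _ ≤ ∑ _J ∈ P, 2 ^ k := by
        refine Finset.sum_le_sum fun J hJ => ?_
        rw [Fintype.card_piFinset]
        have : ∀ i, (if i ∈ J then ({-2, 2} : Finset ℝ) else ({0} : Finset ℝ)).card
            = if i ∈ J then 2 else 1 := by
          intro i; by_cases h : i ∈ J <;> simp only [h, if_true, if_false]
          · rw [Finset.card_insert_of_notMem (by norm_num), Finset.card_singleton]
          · rw [Finset.card_singleton]
        calc ∏ i, (if i ∈ J then ({-2, 2} : Finset ℝ) else ({0} : Finset ℝ)).card
            = ∏ i, (if i ∈ J then 2 else 1) := by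
              exact Finset.prod_congr rfl fun i _ => this i
          _ = 2 ^ J.card := by
              rw [Finset.prod_ite_mem, Finset.univ_inter, Finset.prod_const]
          _ ≤ 2 ^ k := by
              apply Nat.pow_le_pow_right (by norm_num)
              rw [hP, Finset.mem_filter] at hJ
              exact hJ.2
    _ = P.card * 2 ^ k := by rw [Finset.sum_const, smul_eq_mul]
    _ ≤ ((k + 1) * N ^ k) * 2 ^ k := by
        apply Nat.mul_le_mul_right
        have hPsub : P ⊆ (Finset.range (k+1)).biUnion
            (fun j => Finset.powersetCard j (Finset.univ : Finset (Fin N))) := by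
          intro J hJ
          rw [hP, Finset.mem_filter] at hJ
          rw [Finset.mem_biUnion]
          exact ⟨J.card, Finset.mem_range.mpr (Nat.lt_succ_of_le hJ.2),
            Finset.mem_powersetCard.mpr ⟨Finset.subset_univ _, rfl⟩⟩
        calc P.card ≤ _ := Finset.card_le_card hPsub
          _ ≤ ∑ j ∈ Finset.range (k+1), (Finset.powersetCard j (Finset.univ : Finset (Fin N))).card :=
              Finset.card_biUnion_le
          _ ≤ ∑ _j ∈ Finset.range (k+1), N ^ k := by
              refine Finset.sum_le_sum fun j hj => ?_
              rw [Finset.card_powersetCard, Finset.card_univ, Fintype.card_fin]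
              calc N.choose j ≤ N ^ j := Nat.choose_le_pow _ _
                _ ≤ N ^ k := Nat.pow_le_pow_right hN (Nat.lt_succ_iff.mp (Finset.mem_range.mp hj))
          _ = (k + 1) * N ^ k := by rw [Finset.sum_const, Finset.card_range, smul_eq_mul]

lemma main_bound (N : ℕ) (E : ℝ) (k : ℕ) (hE : 0 < E) (hk : 1 ≤ k) :
    stdGaussianPi N (BadSet N E k) ≤
      ENNReal.ofReal ((2 : ℝ) ^ (-E) * 2 ^ (k : ℕ) * (Real.exp 1 * N) ^ (k : ℕ) * 2) := by
  cases N with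
  | zero =>
    have hempty : BadSet 0 E k = ∅ := by
      ext g
      simp only [BadSet, Set.mem_setOf_eq, Set.mem_empty_iff_false, iff_false]
      rintro ⟨x, x', -, -, hne, -⟩
      exact hne (funext fun i => absurd i.2 (by omega))
    rw [hempty, measure_empty]
    exact zero_le
  | succ m =>
    set t : ℝ := (2:ℝ)^(-E) with hts
    have ht : 0 < t := Real.rpow_pos_of_pos (by norm_num) _
    push_cast
    calc stdGaussianPi (m+1) (BadSet (m+1) E k)
        ≤ stdGaussianPi (m+1) (⋃ v ∈ Fset (m+1) k,
            {g : Fin (m+1) → ℝ | |∑ i, g i * v i| ≤ 2 * t}) :=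
          measure_mono (badset_subset (m+1) E k)
      _ ≤ ∑ v ∈ Fset (m+1) k, stdGaussianPi (m+1)
            {g : Fin (m+1) → ℝ | |∑ i, g i * v i| ≤ 2 * t} :=
          measure_biUnion_finset_le _ _
      _ ≤ ∑ _v ∈ Fset (m+1) k, ENNReal.ofReal t := by
          refine Finset.sum_le_sum fun v hv => ?_
          rw [Fset, Finset.mem_filter, Fintype.mem_piFinset] at hv
          obtain ⟨hmem, hne, -⟩ := hv
          obtain ⟨i₀, hi₀⟩ := Function.ne_iff.mp hne
          simp only [Pi.zero_apply] at hi₀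
          have h2 : v i₀ = 2 ∨ v i₀ = -2 := by
            have := hmem i₀
            simp only [Finset.mem_insert, Finset.mem_singleton] at this
            rcases this with h | h | h
            · exact Or.inr h
            · exact absurd h hi₀
            · exact Or.inl h
          exact event_bound v i₀ h2 t ht.le
      _ = (Fset (m+1) k).card • ENNReal.ofReal t := Finset.sum_const _
      _ ≤ ENNReal.ofReal (t * 2 ^ (k:ℕ) * (Real.exp 1 * (m+1)) ^ (k:ℕ) * 2) := by
          rw [nsmul_eq_mul, ← ENNReal.ofReal_natCast, ← ENNReal.ofReal_mul (by positivity)]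
          refine ENNReal.ofReal_le_ofReal ?_
          have hcard : ((Fset (m+1) k).card : ℝ) ≤ ((k:ℝ) + 1) * ((m:ℝ)+1) ^ k * 2 ^ k := by
            have := Fset_card (m+1) k (by omega)
            calc ((Fset (m+1) k).card : ℝ) ≤ (((k+1) * (m+1) ^ k * 2 ^ k : ℕ) : ℝ) := by
                  exact_mod_cast this
              _ = ((k:ℝ) + 1) * ((m:ℝ)+1) ^ k * 2 ^ k := by push_cast; ring
          have hexp : ((k:ℝ) + 1) ≤ Real.exp 1 ^ k := by
            rw [← Real.exp_nat_mul, mul_one]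
            exact Real.add_one_le_exp (k:ℝ)
          have hNk : (0:ℝ) ≤ ((m:ℝ)+1) ^ k := by positivity
          have h2k : (0:ℝ) ≤ (2:ℝ) ^ k := by positivity
          calc ((Fset (m+1) k).card : ℝ) * t
              ≤ (((k:ℝ) + 1) * ((m:ℝ)+1) ^ k * 2 ^ k) * t :=
                mul_le_mul_of_nonneg_right hcard ht.le
            _ ≤ ((Real.exp 1 ^ k) * ((m:ℝ)+1) ^ k * 2 ^ k) * t := by
                refine mul_le_mul_of_nonneg_right ?_ ht.le
                refine mul_le_mul_of_nonneg_right (mul_le_mul_of_nonneg_right hexp hNk) h2k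
            _ ≤ t * 2 ^ (k:ℕ) * (Real.exp 1 * ((m:ℝ)+1)) ^ (k:ℕ) * 2 := by
                rw [mul_pow]
                nlinarith [ht.le, hNk, h2k, pow_nonneg (Real.exp_nonneg 1) k,
                  mul_nonneg (mul_nonneg (mul_nonneg (pow_nonneg (Real.exp_nonneg 1) k) hNk) h2k) ht.le]
      _ = ENNReal.ofReal ((2 : ℝ) ^ (-E) * 2 ^ (k:ℕ) * (Real.exp 1 * ((m:ℝ)+1)) ^ (k:ℕ) * 2) := rfl

lemma tendsto_aux (Nn kn : ℕ → ℕ) (En : ℕ → ℝ) (hN : ∀ n, 2 ≤ Nn n) (hk : ∀ n, 1 ≤ kn n)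
    (hE : ∀ n, 0 < En n)
    (hr : Tendsto (fun n => En n / (kn n * Real.log (Nn n))) atTop atTop) :
    Tendsto (fun n => 2 * Real.exp (Real.log 2 * (-(En n)) + kn n * Real.log 2
      + kn n * (1 + Real.log (Nn n)))) atTop (nhds 0) := by
  set r : ℕ → ℝ := fun n => En n / (kn n * Real.log (Nn n)) with hrdef
  set L : ℕ → ℝ := fun n => Real.log 2 * (-(En n)) + kn n * Real.log 2
      + kn n * (1 + Real.log (Nn n)) with hLdef
  have hl2a : (0.6931471803 : ℝ) < Real.log 2 := Real.log_two_gt_d9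
  have hl2b : Real.log 2 < 0.6931471808 := Real.log_two_lt_d9
  have hL : Tendsto L atTop atBot := by
    have hg : Tendsto (fun n => 4 * Real.log 2 - r n * Real.log 2 ^ 2) atTop atBot := by
      have h1 : Tendsto (fun n => r n * Real.log 2 ^ 2) atTop atTop :=
        hr.atTop_mul_const (by positivity)
      have h2 : Tendsto (fun n => -(r n * Real.log 2 ^ 2)) atTop atBot :=
        tendsto_neg_atTop_atBot.comp h1
      have := tendsto_atBot_add_const_left atTop (4 * Real.log 2) h2
      simpa [sub_eq_add_neg] using this
    refine tendsto_atBot_mono' atTop ?_ hg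
    filter_upwards [hr.eventually_ge_atTop 8] with n hn
    have hKk : (1:ℝ) ≤ (kn n : ℝ) := by exact_mod_cast hk n
    have hlN : Real.log 2 ≤ Real.log (Nn n) :=
      Real.log_le_log (by norm_num) (by exact_mod_cast hN n)
    have hden : (0:ℝ) < (kn n : ℝ) * Real.log (Nn n) := by nlinarith
    have hEeq : En n = r n * ((kn n : ℝ) * Real.log (Nn n)) := by
      rw [hrdef]; field_simp [(lt_of_lt_of_le (Real.log_pos (by norm_num : (1:ℝ) < 2)) hlN).ne']
    have h1 : Real.log 2 ≤ (kn n : ℝ) * Real.log (Nn n) := by nlinarith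
    rw [hLdef]
    simp only
    rw [hEeq]
    set K := (kn n : ℝ)
    set lN := Real.log (Nn n)
    set l2 := Real.log 2
    set R := r n
    have hR : (8:ℝ) ≤ R := hn
    nlinarith [mul_nonneg (mul_nonneg (by linarith : (0:ℝ) ≤ l2) (by linarith : (0:ℝ) ≤ R - 8))
        (by linarith : (0:ℝ) ≤ K * lN - l2),
      mul_nonneg (by linarith : (0:ℝ) ≤ K * lN - l2) (by linarith : (0:ℝ) ≤ l2),
      mul_nonneg (mul_nonneg (by linarith : (0:ℝ) ≤ K) (by linarith : (0:ℝ) ≤ lN - l2))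
        (by linarith : (0:ℝ) ≤ l2),
      mul_nonneg (by linarith : (0:ℝ) ≤ K - 1) (by linarith : (0:ℝ) ≤ lN)]
  have h := (Real.tendsto_exp_atBot.comp hL).const_mul (2:ℝ)
  rw [mul_zero] at h
  exact h

theorem stmt15 :
    ∃ C : ℝ, 0 < C ∧
      (∀ (N : ℕ) (E : ℝ) (k : ℕ), 0 < E → 1 ≤ k →
        stdGaussianPi N (BadSet N E k) ≤
          ENNReal.ofReal ((2 : ℝ) ^ (-E) * 2 ^ (k : ℕ) * (Real.exp 1 * N) ^ (k : ℕ) * C)) ∧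
      (∀ (Nn kn : ℕ → ℕ) (En : ℕ → ℝ), (∀ n, 2 ≤ Nn n) → (∀ n, 1 ≤ kn n) →
        (∀ n, 0 < En n) →
        Tendsto (fun n => En n / (kn n * Real.log (Nn n))) atTop atTop →
        Tendsto (fun n => stdGaussianPi (Nn n) (BadSet (Nn n) (En n) (kn n)))
          atTop (nhds 0)) := by
  refine ⟨2, by norm_num, fun N E k hE hk => main_bound N E k hE hk, ?_⟩
  intro Nn kn En hN hk hE hr
  set b : ℕ → ℝ := fun n =>
    (2 : ℝ) ^ (-(En n)) * 2 ^ (kn n : ℕ) * (Real.exp 1 * (Nn n : ℝ)) ^ (kn n : ℕ) * 2 with hbdef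
  have hbound : ∀ n, stdGaussianPi (Nn n) (BadSet (Nn n) (En n) (kn n))
      ≤ ENNReal.ofReal (b n) := fun n => main_bound (Nn n) (En n) (kn n) (hE n) (hk n)
  have hbL : ∀ n, b n = 2 * Real.exp (Real.log 2 * (-(En n)) + (kn n : ℝ) * Real.log 2
      + (kn n : ℝ) * (1 + Real.log (Nn n))) := by
    intro n
    have hN0 : (0 : ℝ) < (Nn n : ℝ) := by
      have := hN n; positivity
    have e1 : (2 : ℝ) ^ (-(En n)) = Real.exp (Real.log 2 * (-(En n))) :=
      Real.rpow_def_of_pos (by norm_num) _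
    have e2 : (2 : ℝ) ^ (kn n : ℕ) = Real.exp ((kn n : ℝ) * Real.log 2) := by
      rw [← Real.exp_log (show (0:ℝ) < 2 ^ (kn n : ℕ) by positivity), Real.log_pow]
    have e3 : (Real.exp 1 * (Nn n : ℝ)) ^ (kn n : ℕ)
        = Real.exp ((kn n : ℝ) * (1 + Real.log (Nn n))) := by
      have hpos : (0 : ℝ) < Real.exp 1 * (Nn n : ℝ) := mul_pos (Real.exp_pos 1) hN0
      rw [← Real.exp_log (pow_pos hpos _), Real.log_pow,
        Real.log_mul (Real.exp_ne_zero 1) (ne_of_gt hN0), Real.log_exp]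
    rw [hbdef]
    simp only
    rw [e1, e2, e3, ← Real.exp_add, ← Real.exp_add]
    exact mul_comm _ _
  have hb0 : Tendsto b atTop (nhds 0) :=
    Tendsto.congr (fun n => (hbL n).symm) (tendsto_aux Nn kn En hN hk hE hr)
  have hof : Tendsto (fun n => ENNReal.ofReal (b n)) atTop (nhds 0) := by
    have := ENNReal.tendsto_ofReal hb0
    simpa using this
  exact tendsto_of_tendsto_of_tendsto_of_le_of_le tendsto_const_nhds hof
    (fun n => zero_le) hbound
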